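/- Let n ≥ 2 and k, l be integers with k ≢ 0, l ≢ 0 and k ≢ l (mod n), and let j ∈ {0,1,2} with condition indices read mod 3. If (F1.j) and (F2.(−j)) both hold then (C.j) holds; and if (F1.j) and (F2.(1−j)) both hold then (B.(j+1)) holds. -/

import Mathlib

/-- `c ≡ ±n/p (mod n)`: `p` divides `n`, and `c ≡ n/p` or `c ≡ -n/p (mod n)`. -/
def pmMod (n p c : ℤ) : Prop := p ∣ n ∧ (n ∣ (c - n / p) ∨ n ∣ (c + n / p))

/-- Conditions (B.0), (B.1), (B.2). -/
def condB (n k l : ℤ) : ZMod 3 → Prop := fun j =>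
  if j = 0 then n ∣ (2 * k - l) else if j = 1 then n ∣ (2 * l - k) else n ∣ (k + l)

/-- Conditions (C.0), (C.1), (C.2). -/
def condC (n k l : ℤ) : ZMod 3 → Prop := fun j =>
  if j = 0 then pmMod n 3 l else if j = 1 then pmMod n 3 k else pmMod n 3 (k - l)

/-- Conditions (D.0), (D.1), (D.2). -/
def condD (n k l : ℤ) : ZMod 3 → Prop := fun j =>
  if j = 0 then 2 ∣ n ∧ n ∣ (2 * k - l - n / 2)
  else if j = 1 then 2 ∣ n ∧ n ∣ (2 * l - k - n / 2)
  else 2 ∣ n ∧ n ∣ (k + l - n / 2)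

/-- Conditions (E.0), (E.1), (E.2). -/
def condE (n k l : ℤ) : ZMod 3 → Prop := fun j =>
  if j = 0 then pmMod n 3 (2 * k - l) else if j = 1 then pmMod n 3 (2 * l - k)
  else pmMod n 3 (k + l)

/-- Conditions (F1.0), (F1.1), (F1.2). -/
def condF1 (n k l : ℤ) : ZMod 3 → Prop := fun j =>
  if j = 0 then n ∣ (5 * k - l) else if j = 1 then n ∣ (5 * l - 4 * k) else n ∣ (k + 4 * l)

/-- Conditions (F2.0), (F2.1), (F2.2). -/
def condF2 (n k l : ℤ) : ZMod 3 → Prop := fun j =>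
  if j = 0 then n ∣ (4 * l - 5 * k) else if j = 1 then n ∣ (4 * k + l) else n ∣ (5 * l - k)

lemma key_pm (n c : ℤ) (h3 : n ∣ 3 * c) (hc : ¬ n ∣ c) : pmMod n 3 c := by
  have h3n : (3 : ℤ) ∣ n := by
    by_contra h
    have hcop : IsCoprime (n : ℤ) 3 :=
      ((Int.prime_three.coprime_iff_not_dvd).mpr h).symm
    exact hc (hcop.dvd_of_dvd_mul_left h3)
  obtain ⟨m, hm⟩ := h3n
  have hdiv : n / 3 = m := by rw [hm]; exact Int.mul_ediv_cancel_left m (by norm_num)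
  have hmc : m ∣ c := by
    rcases h3 with ⟨t, ht⟩
    refine ⟨t, ?_⟩
    rw [hm] at ht; linarith
  obtain ⟨t, ht⟩ := hmc
  refine ⟨⟨m, hm⟩, ?_⟩
  have hmod : t % 3 = 0 ∨ t % 3 = 1 ∨ t % 3 = 2 := by omega
  rcases hmod with h | h | h
  · exfalso
    have : (3 : ℤ) ∣ t := by omega
    obtain ⟨s, hs⟩ := this
    exact hc ⟨s, by rw [ht, hs, hm]; ring⟩
  · left
    have : (3 : ℤ) ∣ t - 1 := by omega
    obtain ⟨s, hs⟩ := this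
    exact ⟨s, by rw [hdiv, ht, hm]; linear_combination m * hs⟩
  · right
    have : (3 : ℤ) ∣ t + 1 := by omega
    obtain ⟨s, hs⟩ := this
    exact ⟨s, by rw [hdiv, ht, hm]; linear_combination m * hs⟩

theorem stmt2 (n : ℕ) (hn : 2 ≤ n) (k l : ℤ)
    (hk : ¬ (n : ℤ) ∣ k) (hl : ¬ (n : ℤ) ∣ l) (hkl : ¬ (n : ℤ) ∣ (k - l))
    (j : ZMod 3) :
    (condF1 n k l j ∧ condF2 n k l (-j) → condC n k l j) ∧
    (condF1 n k l j ∧ condF2 n k l (1 - j) → condB n k l (j + 1)) := by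
  have hj : j = 0 ∨ j = 1 ∨ j = 2 := by revert j; decide
  rcases hj with rfl | rfl | rfl <;>
    simp (config := { decide := true }) only [condF1, condF2, condB, condC,
      if_true, if_false, ite_true, ite_false, reduceIte] <;>
    constructor
  · rintro ⟨h1, h2⟩
    exact key_pm n l (by have := dvd_add h1 h2; convert this using 1; rfl; ring) hl
  · rintro ⟨h1, h2⟩
    have := dvd_sub h2 h1
    convert this using 1; rfl; ring
  · rintro ⟨h1, h2⟩
    exact key_pm n k (by have := dvd_sub h2 h1; convert this using 1; rfl; ring) hk
  · rintro ⟨h1, h2⟩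
    have := dvd_sub h1 h2
    convert this using 1; rfl; ring
  · rintro ⟨h1, h2⟩
    exact key_pm n (k - l) (by have := dvd_sub h2 h1; convert this using 1; rfl; ring) hkl
  · rintro ⟨h1, h2⟩
    have := dvd_sub h1 h2
    convert this using 1; rfl; ring
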